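/- Let k ≥ 4 be even and r = 2k·k₁ + r₁ with k₁ ≥ k/2, 1 ≤ r₁ ≤ 2k−1. Under the 3-edge-coloring of K_{r,r} described by the groups U₁,…,U_{2k}, W₁,…,W_{2k} (color 1 on matched same-parity group edges, color 2 between U_i and W_{i−1}, color 3 elsewhere), for any u ∈ U_i and v ∈ W_j with i ≢ j (mod 2), there exist at least k internally disjoint rainbow u–v paths of length at most 3. -/

import Mathlib

open SimpleGraph

/-- The complete bipartite graph `K_{r,r}` with both parts `Fin r`. -/
abbrev Krr (r : ℕ) : SimpleGraph (Fin r ⊕ Fin r) :=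
  completeBipartiteGraph (Fin r) (Fin r)

/-- A walk is a rainbow path (w.r.t. edge-coloring `c`) if it is a path and
all its edges receive pairwise distinct colors. -/
def RainbowPath {V α : Type*} {G : SimpleGraph V} (c : Sym2 V → α) {u v : V}
    (p : G.Walk u v) : Prop :=
  p.IsPath ∧ (p.edges.map c).Nodup

/-- Two `u`-`v` walks are internally disjoint if they share no vertices other
than `u` and `v`. -/
def IntDisjoint {V : Type*} {G : SimpleGraph V} {u v : V}
    (p q : G.Walk u v) : Prop :=
  ∀ x, x ∈ p.support → x ∈ q.support → x = u ∨ x = v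

/-- `G` admits a `j`-edge-coloring under which every two distinct vertices are
joined by at least `k` internally disjoint rainbow paths. -/
def HasRainbowKColoring {V : Type*} (G : SimpleGraph V) (k j : ℕ) : Prop :=
  ∃ c : Sym2 V → Fin j, ∀ u v : V, u ≠ v →
    ∃ P : Fin k → G.Walk u v, Function.Injective P ∧
      (∀ i, RainbowPath c (P i)) ∧
      ∀ i i', i ≠ i' → IntDisjoint (P i) (P i')

/-- The rainbow `k`-connectivity: the least number of colors as above. -/
noncomputable def rck {V : Type*} (G : SimpleGraph V) (k : ℕ) : ℕ :=
  sInf {j | HasRainbowKColoring G k j}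

/-- A side of the bipartition: `2k` groups, each with `k₁` designated vertices
(`Sum.inl (i, p)` is the `p`-th designated vertex of group `i`), plus one extra
vertex `Sum.inr i` for each of the first `r₁` groups. In total `2k·k₁ + r₁ = r`
vertices. -/
abbrev GV (k k₁ r₁ : ℕ) := (Fin (2 * k) × Fin k₁) ⊕ Fin r₁

/-- The group (0-indexed) of a vertex of one side. -/
def grp {k k₁ r₁ : ℕ} : GV k k₁ r₁ → ℕ
  | Sum.inl (i, _) => i.val
  | Sum.inr s => s.val

/-- The condition for color 1: matched designated vertices (same index `p`) in
same-parity groups, or two extra vertices in same-parity groups. -/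
def color1 {k k₁ r₁ : ℕ} : GV k k₁ r₁ → GV k k₁ r₁ → Bool
  | Sum.inl (i, p), Sum.inl (j, q) => decide (p = q ∧ i.val % 2 = j.val % 2)
  | Sum.inr s, Sum.inr t => decide (s.val % 2 = t.val % 2)
  | _, _ => false

/-- The color of the edge from `a` in the `U`-side to `b` in the `W`-side:
color `0` ("1") on matched same-parity pairs, color `1` ("2") on edges from
`U_i` to `W_{i-1}` (indices mod `2k`), and color `2` ("3") otherwise. -/
def col (k : ℕ) {k₁ r₁ : ℕ} (a b : GV k k₁ r₁) : Fin 3 :=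
  if color1 a b then 0
  else if (grp b + 1) % (2 * k) = grp a then 1
  else 2

/-- The 3-edge-coloring of `K_{r,r}` (with `r = 2k·k₁ + r₁`). -/
def theColoring (k k₁ r₁ : ℕ) : Sym2 (GV k k₁ r₁ ⊕ GV k k₁ r₁) → Fin 3 :=
  Sym2.lift ⟨fun x y =>
    match x, y with
    | Sum.inl a, Sum.inr b => col k a b
    | Sum.inr b, Sum.inl a => col k a b
    | _, _ => 0,
    by intro x y; cases x <;> cases y <;> rfl⟩

/-! ### Auxiliary lemmas -/

lemma add_mod_ne' (n x d : ℕ) (h0 : 0 < d) (hd : d < n) : (x + d) % n ≠ x % n := by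
  intro h
  have h3 : n ∣ (x + d) - x := (Nat.modEq_iff_dvd' (Nat.le_add_right x d)).mp h.symm
  simp only [Nat.add_sub_cancel_left] at h3
  have := Nat.le_of_dvd h0 h3
  omega

lemma mod2k (k x : ℕ) : x % (2*k) % 2 = x % 2 := Nat.mod_mod_of_dvd x ⟨k, rfl⟩

section Helpers
variable {k k₁ r₁ : ℕ}

lemma adj_lr (x y : GV k k₁ r₁) :
    (completeBipartiteGraph (GV k k₁ r₁) (GV k k₁ r₁)).Adj (Sum.inl x) (Sum.inr y) := by simp

lemma adj_rl (x y : GV k k₁ r₁) :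
    (completeBipartiteGraph (GV k k₁ r₁) (GV k k₁ r₁)).Adj (Sum.inr x) (Sum.inl y) := by simp

lemma grp_inl (g : Fin (2*k)) (p : Fin k₁) : grp (Sum.inl (g,p) : GV k k₁ r₁) = g.val := rfl

lemma grp_inr (s : Fin r₁) : grp (Sum.inr s : GV k k₁ r₁) = s.val := rfl

/-- The length-one direct walk. -/
def mk1 (a b : GV k k₁ r₁) :
    (completeBipartiteGraph (GV k k₁ r₁) (GV k k₁ r₁)).Walk (Sum.inl a) (Sum.inr b) :=
  .cons (adj_lr a b) .nil

/-- The length-three walk through `w` (on the `W` side) and `u` (on the `U` side). -/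
def mk3 (a w u b : GV k k₁ r₁) :
    (completeBipartiteGraph (GV k k₁ r₁) (GV k k₁ r₁)).Walk (Sum.inl a) (Sum.inr b) :=
  .cons (adj_lr a w) (.cons (adj_rl w u) (.cons (adj_lr u b) .nil))

lemma rainbow_mk3 (a w u b : GV k k₁ r₁) (hwb : w ≠ b) (hua : u ≠ a)
    (h1 : col k a w ≠ col k u w) (h2 : col k a w ≠ col k u b)
    (h3 : col k u w ≠ col k u b) :
    RainbowPath (theColoring k k₁ r₁) (mk3 a w u b) := by
  constructor
  · rw [SimpleGraph.Walk.isPath_def]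
    show List.Nodup [Sum.inl a, Sum.inr w, Sum.inl u, Sum.inr b]
    simp [hwb, Ne.symm hua]
  · show List.Nodup (List.map (theColoring k k₁ r₁)
      [s(Sum.inl a, Sum.inr w), s(Sum.inr w, Sum.inl u), s(Sum.inl u, Sum.inr b)])
    show List.Nodup [col k a w, col k u w, col k u b]
    simp [h1, h2, h3]

lemma rainbow_mk1 (a b : GV k k₁ r₁) :
    RainbowPath (theColoring k k₁ r₁) (mk1 a b) := by
  constructor
  · rw [SimpleGraph.Walk.isPath_def]
    show List.Nodup [Sum.inl a, Sum.inr b]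
    simp
  · show List.Nodup [theColoring k k₁ r₁ s(Sum.inl a, Sum.inr b)]
    simp

lemma disj_mk1_left (a b : GV k k₁ r₁)
    (q : (completeBipartiteGraph (GV k k₁ r₁) (GV k k₁ r₁)).Walk (Sum.inl a) (Sum.inr b)) :
    IntDisjoint (mk1 a b) q := by
  intro x hx _
  have : x ∈ [Sum.inl a, Sum.inr b] := hx
  simpa using this

lemma disj_symm {V : Type*} {G : SimpleGraph V} {u v : V} (p q : G.Walk u v)
    (h : IntDisjoint p q) : IntDisjoint q p := fun x hx hx' => h x hx' hx

lemma disj_mk3 (a b w u w' u' : GV k k₁ r₁) (hw : w ≠ w') (hu : u ≠ u') :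
    IntDisjoint (mk3 a w u b) (mk3 a w' u' b) := by
  intro x hx hx'
  have h1 : x ∈ [Sum.inl a, Sum.inr w, Sum.inl u, Sum.inr b] := hx
  have h2 : x ∈ [Sum.inl a, Sum.inr w', Sum.inl u', Sum.inr b] := hx'
  simp only [List.mem_cons, List.mem_singleton, List.not_mem_nil, or_false] at h1 h2
  rcases h1 with rfl | rfl | rfl | rfl <;> rcases h2 with h2 | h2 | h2 | h2 <;>
    simp_all

lemma assemble (k : ℕ) (hk : 4 ≤ k) (a b : GV k k₁ r₁)
    (ws us : Fin (k-1) → GV k k₁ r₁)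
    (hwb : ∀ x, ws x ≠ b) (hua : ∀ x, us x ≠ a)
    (hwinj : Function.Injective ws) (huinj : Function.Injective us)
    (h1 : ∀ x, col k a (ws x) ≠ col k (us x) (ws x))
    (h2 : ∀ x, col k a (ws x) ≠ col k (us x) b)
    (h3 : ∀ x, col k (us x) (ws x) ≠ col k (us x) b) :
    ∃ P : Fin k →
        (completeBipartiteGraph (GV k k₁ r₁) (GV k k₁ r₁)).Walk
          (Sum.inl a) (Sum.inr b),
      Function.Injective P ∧
      (∀ i, RainbowPath (theColoring k k₁ r₁) (P i)) ∧
      (∀ i, (P i).length ≤ 3) ∧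
      ∀ i i', i ≠ i' → IntDisjoint (P i) (P i') := by
  set P : Fin k → (completeBipartiteGraph (GV k k₁ r₁) (GV k k₁ r₁)).Walk
      (Sum.inl a) (Sum.inr b) := fun idx =>
    if h : idx.val = 0 then mk1 a b
    else mk3 a (ws ⟨idx.val - 1, by have := idx.isLt; omega⟩)
      (us ⟨idx.val - 1, by have := idx.isLt; omega⟩) b with hP
  have hdisj : ∀ i i', i ≠ i' → IntDisjoint (P i) (P i') := by
    intro i i' hne
    by_cases hi : i.val = 0 <;> by_cases hi' : i'.val = 0
    · exact absurd (Fin.ext (hi.trans hi'.symm)) hne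
    · rw [hP]; simp only [dif_pos hi]; exact disj_mk1_left a b _
    · rw [hP]; simp only [dif_pos hi']
      exact disj_symm _ _ (disj_mk1_left a b _)
    · rw [hP]; simp only [dif_neg hi, dif_neg hi']
      apply disj_mk3
      · intro h
        exact hne (by
          have := hwinj h
          have h2 : i.val - 1 = i'.val - 1 := congrArg Fin.val this
          exact Fin.ext (by omega))
      · intro h
        exact hne (by
          have := huinj h
          have h2 : i.val - 1 = i'.val - 1 := congrArg Fin.val this
          exact Fin.ext (by omega))
  refine ⟨P, ?_, ?_, ?_, hdisj⟩
  · intro i i' h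
    by_contra hne
    by_cases hi : i.val = 0 <;> by_cases hi' : i'.val = 0
    · exact hne (Fin.ext (hi.trans hi'.symm))
    · rw [hP] at h; simp only [dif_pos hi, dif_neg hi'] at h
      have := congrArg SimpleGraph.Walk.length h
      simp [mk1, mk3] at this
    · rw [hP] at h; simp only [dif_pos hi', dif_neg hi] at h
      have := congrArg SimpleGraph.Walk.length h
      simp [mk1, mk3] at this
    · set x : Fin (k-1) := ⟨i.val - 1, by have := i.isLt; omega⟩ with hx
      have hmem : Sum.inr (ws x) ∈ (P i).support := by
        rw [hP]; simp only [dif_neg hi]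
        show Sum.inr (ws x) ∈ [Sum.inl a, Sum.inr (ws x), _, Sum.inr b]
        simp
      have hmem' : Sum.inr (ws x) ∈ (P i').support := h ▸ hmem
      rcases hdisj i i' hne _ hmem hmem' with h' | h'
      · exact absurd h' (by simp)
      · exact hwb x (by injection h')
  · intro i
    by_cases hi : i.val = 0
    · rw [hP]; simp only [dif_pos hi]; exact rainbow_mk1 a b
    · rw [hP]; simp only [dif_neg hi]
      exact rainbow_mk3 a _ _ b (hwb _) (hua _) (h1 _) (h2 _) (h3 _)
  · intro i
    by_cases hi : i.val = 0
    · rw [hP]; simp only [dif_pos hi]; show 1 ≤ 3; omega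
    · rw [hP]; simp only [dif_neg hi]; show 3 ≤ 3; omega

end Helpers
theorem stmt14 (k k₁ r₁ : ℕ) (hk : 4 ≤ k) (hke : Even k)
    (hk₁ : k / 2 ≤ k₁) (hr₁ : 1 ≤ r₁) (hr₁' : r₁ ≤ 2 * k - 1)
    (a b : GV k k₁ r₁) (hpar : grp a % 2 ≠ grp b % 2) :
    ∃ P : Fin k →
        (completeBipartiteGraph (GV k k₁ r₁) (GV k k₁ r₁)).Walk
          (Sum.inl a) (Sum.inr b),
      Function.Injective P ∧
      (∀ i, RainbowPath (theColoring k k₁ r₁) (P i)) ∧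
      (∀ i, (P i).length ≤ 3) ∧
      ∀ i i', i ≠ i' → IntDisjoint (P i) (P i') := by
  obtain ⟨m, hm⟩ := hke
  have hm2 : 2 ≤ m := by omega
  have hmk₁ : m ≤ k₁ := by omega
  have hk₁0 : 0 < k₁ := by omega
  have h2k0 : 0 < 2*k := by omega
  have hi : grp a < 2*k := by
    rcases a with ⟨g, p⟩ | s
    · exact g.isLt
    · have := s.isLt; simp only [grp]; omega
  have hj : grp b < 2*k := by
    rcases b with ⟨g, p⟩ | s
    · exact g.isLt
    · have := s.isLt; simp only [grp]; omega
  have hlt1 : (grp a + 2*k - 1) % (2*k) < 2*k := Nat.mod_lt _ h2k0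
  have hlt2 : (grp b + 1) % (2*k) < 2*k := Nat.mod_lt _ h2k0
  -- the key facts about `b`
  obtain ⟨qb, hb, hbr⟩ :
      ∃ qb : Fin k₁,
        (∀ (g : Fin (2*k)) (p : Fin k₁), (g.val % 2 ≠ grp b % 2 ∨ p ≠ qb) →
          color1 (Sum.inl (g,p)) b = false ∧ (Sum.inl (g,p) : GV k k₁ r₁) ≠ b) ∧
        (∀ s : Fin r₁, s.val % 2 ≠ grp b % 2 → (Sum.inr s : GV k k₁ r₁) ≠ b) := by
    rcases b with ⟨gb, q⟩ | t
    · refine ⟨q, fun g p h => ⟨?_, ?_⟩, fun s hs => by simp⟩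
      · apply decide_eq_false
        rintro ⟨rfl, h2⟩
        simp only [grp] at h
        rcases h with h | h
        · exact h h2
        · exact h rfl
      · intro hh
        rw [Sum.inl.injEq, Prod.mk.injEq] at hh
        simp only [grp] at h
        rcases h with h | h
        · exact h (by rw [hh.1])
        · exact h hh.2
    · refine ⟨⟨0, hk₁0⟩, fun g p _ => ⟨rfl, by simp⟩, fun s hs => ?_⟩
      intro hh
      rw [Sum.inr.injEq] at hh
      simp only [grp] at hs
      exact hs (by rw [hh])
  obtain ⟨tb, htb⟩ : ∃ tb : Fin k₁, tb ≠ qb := by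
    by_cases h0 : qb.val = 0
    · refine ⟨⟨1, by omega⟩, fun hh => ?_⟩
      have h2 : (1 : ℕ) = qb.val := congrArg Fin.val hh
      omega
    · refine ⟨⟨0, hk₁0⟩, fun hh => ?_⟩
      have h2 : (0 : ℕ) = qb.val := congrArg Fin.val hh
      omega
  -- the key facts about `a`, together with the special path C
  obtain ⟨qa, wC, uC, ha, hCc1, hCc2, hCc3, hCwb, hCua, hCwA, hCwB, hCuA, hCuB⟩ :
      ∃ (qa : Fin k₁) (wC uC : GV k k₁ r₁),
        (∀ (g : Fin (2*k)) (p : Fin k₁), (g.val % 2 ≠ grp a % 2 ∨ p ≠ qa) →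
            color1 a (Sum.inl (g,p)) = false ∧ a ≠ Sum.inl (g,p)) ∧
        col k a wC ≠ col k uC wC ∧ col k a wC ≠ col k uC b ∧ col k uC wC ≠ col k uC b ∧
        wC ≠ b ∧ uC ≠ a ∧
        (∀ p : Fin k₁, p ≠ qa → wC ≠ Sum.inl (⟨grp a, hi⟩, p)) ∧
        (∀ p : Fin k₁, wC ≠ Sum.inl (⟨(grp a + 2*k - 1) % (2*k), hlt1⟩, p)) ∧
        (∀ p : Fin k₁, p ≠ qa → uC ≠ Sum.inl (⟨(grp b + 1) % (2*k), hlt2⟩, p)) ∧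
        (∀ p : Fin k₁, uC ≠ Sum.inl (⟨grp b, hj⟩, p)) := by
    rcases a with ⟨ga, q⟩ | s
    · -- `a` is a designated vertex `u_{ga, q}`
      have hpar' : ga.val % 2 ≠ grp b % 2 := hpar
      set gC : ℕ := if (ga.val + 1) % (2*k) = grp b then (ga.val + 2) % (2*k) else ga.val
        with hgCd
      have hgClt : gC < 2*k := by
        rw [hgCd]; split
        · exact Nat.mod_lt _ h2k0
        · exact ga.isLt
      have hgC2 : gC % 2 = ga.val % 2 := by
        rw [hgCd]; split
        · rw [mod2k]; omega
        · rfl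
      have factA : (gC + 1) % (2*k) ≠ grp b := by
        rw [hgCd]; split
        · rename_i hcond
          rw [Nat.mod_add_mod]
          intro hcontra
          have hstep : (ga.val + 1 + 2) % (2*k) = (ga.val + 1) % (2*k) := by
            rw [show ga.val + 1 + 2 = ga.val + 2 + 1 by omega, hcontra, hcond]
          exact add_mod_ne' (2*k) (ga.val+1) 2 (by omega) (by omega) hstep
        · rename_i hcond; exact hcond
      have factB : (grp b + 1) % (2*k) ≠ (gC + 1) % (2*k) := by
        rw [hgCd]; split
        · rename_i hcond
          rw [Nat.mod_add_mod, ← hcond, Nat.mod_add_mod]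
          intro hcontra
          have h' : ga.val + 1 + 1 = ga.val + 2 := by omega
          rw [h'] at hcontra
          exact add_mod_ne' (2*k) (ga.val+2) 1 (by omega) (by omega) hcontra.symm
        · rename_i hcond
          intro hcontra
          have h1 := congrArg (· % 2) hcontra
          simp only [mod2k] at h1
          omega
      have t1 : color1 (Sum.inl (ga, q) : GV k k₁ r₁) (Sum.inl (⟨gC, hgClt⟩, q)) = true :=
        decide_eq_true ⟨rfl, hgC2.symm⟩
      have t2 : color1 (Sum.inl (⟨(gC+1) % (2*k), Nat.mod_lt _ h2k0⟩, tb) : GV k k₁ r₁)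
          (Sum.inl (⟨gC, hgClt⟩, q)) = false := by
        apply decide_eq_false
        rintro ⟨-, h2⟩
        have h2' : (gC + 1) % (2*k) % 2 = gC % 2 := h2
        rw [mod2k] at h2'
        omega
      have t3 := (hb ⟨(gC+1) % (2*k), Nat.mod_lt _ h2k0⟩ tb (Or.inr htb)).1
      have e1 : col k (Sum.inl (ga, q) : GV k k₁ r₁) (Sum.inl (⟨gC, hgClt⟩, q)) = 0 := by
        simp [col, t1]
      have e2 : col k (Sum.inl (⟨(gC+1) % (2*k), Nat.mod_lt _ h2k0⟩, tb) : GV k k₁ r₁)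
          (Sum.inl (⟨gC, hgClt⟩, q)) = 1 := by
        simp [col, t2, grp_inl]
      have e3 : col k (Sum.inl (⟨(gC+1) % (2*k), Nat.mod_lt _ h2k0⟩, tb) : GV k k₁ r₁) b = 2 := by
        simp only [col, t3, Bool.false_eq_true, if_false, grp_inl]
        exact if_neg factB
      refine ⟨q, Sum.inl (⟨gC, hgClt⟩, q),
        Sum.inl (⟨(gC+1) % (2*k), Nat.mod_lt _ h2k0⟩, tb),
        fun g p h => ⟨?_, ?_⟩, ?_, ?_, ?_, ?_, ?_, ?_, ?_, ?_, ?_⟩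
      · apply decide_eq_false
        rintro ⟨rfl, h2⟩
        rcases h with h | h
        · exact h h2.symm
        · exact h rfl
      · intro hh
        rw [Sum.inl.injEq, Prod.mk.injEq] at hh
        rcases h with h | h
        · exact h (by rw [← hh.1]; rfl)
        · exact h hh.2.symm
      · rw [e1, e2]; decide
      · rw [e1, e3]; decide
      · rw [e2, e3]; decide
      -- wC ≠ b
      · exact (hb ⟨gC, hgClt⟩ q (Or.inl (by show gC % 2 ≠ grp b % 2; omega))).2
      -- uC ≠ a
      · intro hh
        rw [Sum.inl.injEq, Prod.mk.injEq] at hh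
        have h1 : (gC + 1) % (2*k) = ga.val := congrArg Fin.val hh.1
        have h2 := congrArg (· % 2) h1
        simp only [mod2k] at h2
        omega
      -- wC differs from the A-family w's
      · intro p hp hh
        rw [Sum.inl.injEq, Prod.mk.injEq] at hh
        exact hp hh.2.symm
      -- wC differs from the B-family w's
      · intro p hh
        rw [Sum.inl.injEq, Prod.mk.injEq] at hh
        have h1 : gC = (ga.val + 2*k - 1) % (2*k) := congrArg Fin.val hh.1
        have h2 := congrArg (· % 2) h1
        simp only [mod2k] at h2
        omega
      -- uC differs from the A-family u's
      · intro p hp hh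
        rw [Sum.inl.injEq, Prod.mk.injEq] at hh
        have h1 : (gC + 1) % (2*k) = (grp b + 1) % (2*k) := congrArg Fin.val hh.1
        have h2 := congrArg (· % 2) h1
        simp only [mod2k] at h2
        omega
      -- uC differs from the B-family u's
      · intro p hh
        rw [Sum.inl.injEq, Prod.mk.injEq] at hh
        have h1 : (gC + 1) % (2*k) = grp b := congrArg Fin.val hh.1
        exact factA h1
    · -- `a` is an extra vertex
      have hpar' : s.val % 2 ≠ grp b % 2 := hpar
      have t1 : color1 (Sum.inr s : GV k k₁ r₁) (Sum.inr s) = true := decide_eq_true rfl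
      have t2 : color1 (Sum.inl (⟨(grp b + 1) % (2*k), hlt2⟩, (⟨0, hk₁0⟩ : Fin k₁)) : GV k k₁ r₁)
          (Sum.inr s) = false := rfl
      have t3 := (hb ⟨(grp b + 1) % (2*k), hlt2⟩ ⟨0, hk₁0⟩ (Or.inl (by rw [mod2k]; omega))).1
      have hne : ¬ ((s.val + 1) % (2*k) = (grp b + 1) % (2*k)) := by
        intro hc
        have h2 := congrArg (· % 2) hc
        simp only [mod2k] at h2
        omega
      have e1 : col k (Sum.inr s : GV k k₁ r₁) (Sum.inr s) = 0 := by simp [col, t1]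
      have e2 : col k (Sum.inl (⟨(grp b + 1) % (2*k), hlt2⟩, (⟨0, hk₁0⟩ : Fin k₁)) : GV k k₁ r₁)
          (Sum.inr s) = 2 := by
        simp only [col, t2, Bool.false_eq_true, if_false, grp_inl, grp_inr]
        exact if_neg hne
      have e3 : col k (Sum.inl (⟨(grp b + 1) % (2*k), hlt2⟩, (⟨0, hk₁0⟩ : Fin k₁)) : GV k k₁ r₁)
          b = 1 := by
        simp [col, t3, grp_inl]
      refine ⟨⟨0, hk₁0⟩, Sum.inr s, Sum.inl (⟨(grp b + 1) % (2*k), hlt2⟩, ⟨0, hk₁0⟩),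
        fun g p _ => ⟨rfl, by simp⟩, ?_, ?_, ?_, ?_, by simp, fun p _ => by simp,
        fun p => by simp, ?_, ?_⟩
      · rw [e1, e2]; decide
      · rw [e1, e3]; decide
      · rw [e2, e3]; decide
      -- wC ≠ b
      · exact hbr s hpar'
      -- uC differs from the A-family u's
      · intro p hp hh
        rw [Sum.inl.injEq, Prod.mk.injEq] at hh
        exact hp hh.2.symm
      -- uC differs from the B-family u's
      · intro p hh
        rw [Sum.inl.injEq, Prod.mk.injEq] at hh
        have h1 : (grp b + 1) % (2*k) = grp b := congrArg Fin.val hh.1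
        have h2 := congrArg (· % 2) h1
        simp only [mod2k] at h2
        omega
  -- color computations for the A- and B-families
  have colA1 : ∀ p : Fin k₁, p ≠ qa → col k a (Sum.inl (⟨grp a, hi⟩, p)) = 2 := by
    intro p hp
    have t := (ha ⟨grp a, hi⟩ p (Or.inr hp)).1
    simp only [col, t, Bool.false_eq_true, if_false, grp_inl]
    refine if_neg ?_
    intro hc
    have h2 := congrArg (· % 2) hc
    simp only [mod2k] at h2
    omega
  have colA2 : ∀ p : Fin k₁,
      col k (Sum.inl (⟨(grp b + 1) % (2*k), hlt2⟩, p) : GV k k₁ r₁)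
        (Sum.inl (⟨grp a, hi⟩, p)) = 0 := by
    intro p
    have t : color1 (Sum.inl (⟨(grp b + 1) % (2*k), hlt2⟩, p) : GV k k₁ r₁)
        (Sum.inl (⟨grp a, hi⟩, p)) = true :=
      decide_eq_true ⟨rfl, by show (grp b + 1) % (2*k) % 2 = grp a % 2; rw [mod2k]; omega⟩
    simp [col, t]
  have colA3 : ∀ p : Fin k₁, col k (Sum.inl (⟨(grp b + 1) % (2*k), hlt2⟩, p)) b = 1 := by
    intro p
    have t := (hb ⟨(grp b + 1) % (2*k), hlt2⟩ p (Or.inl (by rw [mod2k]; omega))).1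
    simp [col, t, grp_inl]
  have colB1 : ∀ p : Fin k₁, col k a (Sum.inl (⟨(grp a + 2*k - 1) % (2*k), hlt1⟩, p)) = 1 := by
    intro p
    have t := (ha ⟨(grp a + 2*k - 1) % (2*k), hlt1⟩ p (Or.inl (by rw [mod2k]; omega))).1
    have heq : ((grp a + 2*k - 1) % (2*k) + 1) % (2*k) = grp a := by
      rw [Nat.mod_add_mod, show grp a + 2*k - 1 + 1 = grp a + 2*k by omega,
        Nat.add_mod_right]
      exact Nat.mod_eq_of_lt hi
    simp [col, t, grp_inl, heq]
  have colB2 : ∀ p : Fin k₁,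
      col k (Sum.inl (⟨grp b, hj⟩, p) : GV k k₁ r₁)
        (Sum.inl (⟨(grp a + 2*k - 1) % (2*k), hlt1⟩, p)) = 0 := by
    intro p
    have t : color1 (Sum.inl (⟨grp b, hj⟩, p) : GV k k₁ r₁)
        (Sum.inl (⟨(grp a + 2*k - 1) % (2*k), hlt1⟩, p)) = true :=
      decide_eq_true ⟨rfl, by show grp b % 2 = (grp a + 2*k - 1) % (2*k) % 2; rw [mod2k]; omega⟩
    simp [col, t]
  have colB3 : ∀ p : Fin k₁, p ≠ qb → col k (Sum.inl (⟨grp b, hj⟩, p)) b = 2 := by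
    intro p hp
    have t := (hb ⟨grp b, hj⟩ p (Or.inr hp)).1
    simp only [col, t, Bool.false_eq_true, if_false, grp_inl]
    refine if_neg ?_
    intro hc
    have h2 := congrArg (· % 2) hc
    simp only [mod2k] at h2
    omega
  -- the index functions
  have hqa := qa.isLt
  have hqb := qb.isLt
  set pav : ℕ → ℕ := fun z => (if z < qa.val then z else z + 1) % k₁ with hpavd
  set pbv : ℕ → ℕ := fun z => (if z < qb.val then z else z + 1) % k₁ with hpbvd
  have hpavlt : ∀ z, pav z < k₁ := fun z => Nat.mod_lt _ hk₁0
  have hpbvlt : ∀ z, pbv z < k₁ := fun z => Nat.mod_lt _ hk₁0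
  have hpavs : ∀ z, z < m - 1 → pav z = if z < qa.val then z else z + 1 := by
    intro z hz; rw [hpavd]; exact Nat.mod_eq_of_lt (by split <;> omega)
  have hpbvs : ∀ z, z < m - 1 → pbv z = if z < qb.val then z else z + 1 := by
    intro z hz; rw [hpbvd]; exact Nat.mod_eq_of_lt (by split <;> omega)
  have hpavne : ∀ z, z < m - 1 → pav z ≠ qa.val := by
    intro z hz; rw [hpavs z hz]; split <;> omega
  have hpbvne : ∀ z, z < m - 1 → pbv z ≠ qb.val := by
    intro z hz; rw [hpbvs z hz]; split <;> omega
  have hpavinj : ∀ z z', z < m - 1 → z' < m - 1 → pav z = pav z' → z = z' := by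
    intro z z' hz hz' h
    rw [hpavs z hz, hpavs z' hz'] at h
    split at h <;> split at h <;> omega
  have hpbvinj : ∀ z z', z < m - 1 → z' < m - 1 → pbv z = pbv z' → z = z' := by
    intro z z' hz hz' h
    rw [hpbvs z hz, hpbvs z' hz'] at h
    split at h <;> split at h <;> omega
  -- the internal-vertex selector functions
  set ws : Fin (k-1) → GV k k₁ r₁ := fun x =>
    if x.val < m - 1 then Sum.inl (⟨grp a, hi⟩, ⟨pav x.val, hpavlt _⟩)
    else if x.val < 2*(m-1) then
      Sum.inl (⟨(grp a + 2*k - 1) % (2*k), hlt1⟩, ⟨pbv (x.val - (m-1)), hpbvlt _⟩)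
    else wC with hwsd
  set us : Fin (k-1) → GV k k₁ r₁ := fun x =>
    if x.val < m - 1 then Sum.inl (⟨(grp b + 1) % (2*k), hlt2⟩, ⟨pav x.val, hpavlt _⟩)
    else if x.val < 2*(m-1) then Sum.inl (⟨grp b, hj⟩, ⟨pbv (x.val - (m-1)), hpbvlt _⟩)
    else uC with husd
  apply assemble k hk a b ws us
  · -- ws x ≠ b
    intro x
    by_cases h1 : x.val < m - 1
    · simp only [hwsd, if_pos h1]
      exact (hb ⟨grp a, hi⟩ _ (Or.inl hpar)).2
    · by_cases h2 : x.val < 2*(m-1)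
      · simp only [hwsd, if_neg h1, if_pos h2]
        exact (hb _ _ (Or.inr (fun hh =>
          hpbvne _ (by omega) (congrArg Fin.val hh)))).2
      · simp only [hwsd, if_neg h1, if_neg h2]
        exact hCwb
  · -- us x ≠ a
    intro x
    by_cases h1 : x.val < m - 1
    · simp only [husd, if_pos h1]
      exact Ne.symm ((ha ⟨(grp b + 1) % (2*k), hlt2⟩ _ (Or.inr (fun hh =>
        hpavne _ h1 (congrArg Fin.val hh)))).2)
    · by_cases h2 : x.val < 2*(m-1)
      · simp only [husd, if_neg h1, if_pos h2]
        exact Ne.symm ((ha ⟨grp b, hj⟩ _ (Or.inl (Ne.symm hpar))).2)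
      · simp only [husd, if_neg h1, if_neg h2]
        exact hCua
  · -- ws injective
    intro x y h
    have hxk := x.isLt
    have hyk := y.isLt
    refine Fin.ext ?_
    by_cases hx1 : x.val < m - 1 <;> by_cases hy1 : y.val < m - 1
    · simp only [hwsd, if_pos hx1, if_pos hy1, Sum.inl.injEq, Prod.mk.injEq,
        Fin.mk.injEq] at h
      exact hpavinj _ _ hx1 hy1 h.2
    · by_cases hy2 : y.val < 2*(m-1)
      · simp only [hwsd, if_pos hx1, if_neg hy1, if_pos hy2, Sum.inl.injEq, Prod.mk.injEq,
          Fin.mk.injEq] at h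
        have h2 := congrArg (· % 2) h.1
        simp only [mod2k] at h2
        omega
      · simp only [hwsd, if_pos hx1, if_neg hy1, if_neg hy2] at h
        exact absurd h.symm (hCwA _ (fun hh => hpavne _ hx1 (congrArg Fin.val hh)))
    · by_cases hx2 : x.val < 2*(m-1)
      · simp only [hwsd, if_neg hx1, if_pos hx2, if_pos hy1, Sum.inl.injEq, Prod.mk.injEq,
          Fin.mk.injEq] at h
        have h2 := congrArg (· % 2) h.1
        simp only [mod2k] at h2
        omega
      · simp only [hwsd, if_neg hx1, if_neg hx2, if_pos hy1] at h
        exact absurd h (hCwA _ (fun hh => hpavne _ hy1 (congrArg Fin.val hh)))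
    · by_cases hx2 : x.val < 2*(m-1) <;> by_cases hy2 : y.val < 2*(m-1)
      · simp only [hwsd, if_neg hx1, if_pos hx2, if_neg hy1, if_pos hy2, Sum.inl.injEq,
          Prod.mk.injEq, Fin.mk.injEq] at h
        have := hpbvinj _ _ (by omega : x.val - (m-1) < m - 1) (by omega) h.2
        omega
      · simp only [hwsd, if_neg hx1, if_pos hx2, if_neg hy1, if_neg hy2] at h
        exact absurd h.symm (hCwB _)
      · simp only [hwsd, if_neg hx1, if_neg hx2, if_neg hy1, if_pos hy2] at h
        exact absurd h (hCwB _)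
      · omega
  · -- us injective
    intro x y h
    have hxk := x.isLt
    have hyk := y.isLt
    refine Fin.ext ?_
    by_cases hx1 : x.val < m - 1 <;> by_cases hy1 : y.val < m - 1
    · simp only [husd, if_pos hx1, if_pos hy1, Sum.inl.injEq, Prod.mk.injEq,
        Fin.mk.injEq] at h
      exact hpavinj _ _ hx1 hy1 h.2
    · by_cases hy2 : y.val < 2*(m-1)
      · simp only [husd, if_pos hx1, if_neg hy1, if_pos hy2, Sum.inl.injEq, Prod.mk.injEq,
          Fin.mk.injEq] at h
        have h2 := congrArg (· % 2) h.1
        simp only [mod2k] at h2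
        omega
      · simp only [husd, if_pos hx1, if_neg hy1, if_neg hy2] at h
        exact absurd h.symm (hCuA _ (fun hh => hpavne _ hx1 (congrArg Fin.val hh)))
    · by_cases hx2 : x.val < 2*(m-1)
      · simp only [husd, if_neg hx1, if_pos hx2, if_pos hy1, Sum.inl.injEq, Prod.mk.injEq,
          Fin.mk.injEq] at h
        have h2 := congrArg (· % 2) h.1
        simp only [mod2k] at h2
        omega
      · simp only [husd, if_neg hx1, if_neg hx2, if_pos hy1] at h
        exact absurd h (hCuA _ (fun hh => hpavne _ hy1 (congrArg Fin.val hh)))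
    · by_cases hx2 : x.val < 2*(m-1) <;> by_cases hy2 : y.val < 2*(m-1)
      · simp only [husd, if_neg hx1, if_pos hx2, if_neg hy1, if_pos hy2, Sum.inl.injEq,
          Prod.mk.injEq, Fin.mk.injEq] at h
        have := hpbvinj _ _ (by omega : x.val - (m-1) < m - 1) (by omega) h.2
        omega
      · simp only [husd, if_neg hx1, if_pos hx2, if_neg hy1, if_neg hy2] at h
        exact absurd h.symm (hCuB _)
      · simp only [husd, if_neg hx1, if_neg hx2, if_neg hy1, if_pos hy2] at h
        exact absurd h (hCuB _)
      · omega
  · -- first color inequality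
    intro x
    by_cases h1 : x.val < m - 1
    · simp only [hwsd, husd, if_pos h1]
      rw [colA1 _ (fun hh => hpavne _ h1 (congrArg Fin.val hh)), colA2]
      decide
    · by_cases h2 : x.val < 2*(m-1)
      · simp only [hwsd, husd, if_neg h1, if_pos h2]
        rw [colB1, colB2]
        decide
      · simp only [hwsd, husd, if_neg h1, if_neg h2]
        exact hCc1
  · -- second color inequality
    intro x
    by_cases h1 : x.val < m - 1
    · simp only [hwsd, husd, if_pos h1]
      rw [colA1 _ (fun hh => hpavne _ h1 (congrArg Fin.val hh)), colA3]
      decide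
    · by_cases h2 : x.val < 2*(m-1)
      · simp only [hwsd, husd, if_neg h1, if_pos h2]
        rw [colB1, colB3 _ (fun hh => hpbvne _ (by omega) (congrArg Fin.val hh))]
        decide
      · simp only [hwsd, husd, if_neg h1, if_neg h2]
        exact hCc2
  · -- third color inequality
    intro x
    by_cases h1 : x.val < m - 1
    · simp only [hwsd, husd, if_pos h1]
      rw [colA2, colA3]
      decide
    · by_cases h2 : x.val < 2*(m-1)
      · simp only [hwsd, husd, if_neg h1, if_pos h2]
        rw [colB2, colB3 _ (fun hh => hpbvne _ (by omega) (congrArg Fin.val hh))]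
        decide
      · simp only [hwsd, husd, if_neg h1, if_neg h2]
        exact hCc3
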